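/- Let 𝒱 be a finite alphabet with a map w : 𝒱 → ℤ^D, and let C = (q₀; v₁…v_n) be a chain, i.e. a sequence q₀, q₁, …, q_n in ℤ^D with q_k = q_{k−1} + w(v_k) and ⟨q_k − v_k(2), w(v_k)⟩ = 0 for all k, where each letter v = (v(1), v(2)) is a pair of vectors and w(v) = v(1) − v(2). If the word v₁…v_n contains a contiguous substring of the form v₀ a₀ v₀ (the same letter v₀ at both ends), then ⟨w(v₀ a₀), w(v₀)⟩ = 0. -/

import Mathlib

theorem stmt9 (D n : ℕ) (v : ℕ → (Fin D → ℤ) × (Fin D → ℤ))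
    (q : ℕ → Fin D → ℤ)
    (hrec : ∀ k < n, q (k + 1) = q k + ((v k).1 - (v k).2))
    (horth : ∀ k < n,
      ∑ i, (q (k + 1) i - (v k).2 i) * ((v k).1 i - (v k).2 i) = 0)
    (i j : ℕ) (hij : i < j) (hjn : j < n) (hvv : v i = v j) :
    ∑ idx, (∑ l ∈ Finset.Ico i j, ((v l).1 idx - (v l).2 idx)) *
        ((v i).1 idx - (v i).2 idx) = 0 := by
  have hin : i < n := lt_trans hij hjn
  have key : ∀ m, i ≤ m → m ≤ j → ∀ idx,
      q m idx = q i idx + ∑ l ∈ Finset.Ico i m, ((v l).1 idx - (v l).2 idx) := by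
    intro m
    induction m with
    | zero => intro him _ idx; interval_cases i <;> simp
    | succ m ih =>
      intro him hmj idx
      rcases eq_or_lt_of_le him with h | h
      · rw [← h]; simp
      · have him' : i ≤ m := Nat.lt_succ_iff.mp h
        have hmn : m < n := by omega
        rw [Finset.sum_Ico_succ_top him', hrec m hmn]
        have := ih him' (by omega) idx
        simp only [Pi.add_apply, Pi.sub_apply]
        linarith
  have hq : ∀ idx, (∑ l ∈ Finset.Ico i j, ((v l).1 idx - (v l).2 idx))
      = q j idx - q i idx := by
    intro idx
    have := key j (le_of_lt hij) le_rfl idx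
    linarith
  have h1 := horth i hin
  have h2 := horth j hjn
  calc ∑ idx, (∑ l ∈ Finset.Ico i j, ((v l).1 idx - (v l).2 idx)) *
        ((v i).1 idx - (v i).2 idx)
      = ∑ idx, ((q (j+1) idx - (v j).2 idx) * ((v j).1 idx - (v j).2 idx)
          - (q (i+1) idx - (v i).2 idx) * ((v i).1 idx - (v i).2 idx)) := by
        apply Finset.sum_congr rfl
        intro idx _
        rw [hq idx, hrec i hin, hrec j hjn, hvv]
        simp only [Pi.add_apply, Pi.sub_apply]
        ring
    _ = 0 := by rw [Finset.sum_sub_distrib, h1, h2, sub_zero]
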